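/- For all distinct integers m, n ≥ 2 there exists a finite simple graph which is m-balanced but not n-balanced. -/

import Mathlib

open SimpleGraph

/-- A finite simple graph is *k-balanced* if there is a coloring of the vertices with k colors
such that the numbers of vertices of any two colors differ by at most 1 and the numbers of
monochromatic edges of any two colors differ by at most 1. -/
def IsKBalanced (k : ℕ) {V : Type*} (G : SimpleGraph V) : Prop :=
  ∃ c : V → Fin k, ∀ i j : Fin k,
    |(({v | c v = i} : Set V).ncard : ℤ) - (({v | c v = j} : Set V).ncard : ℤ)| ≤ 1 ∧
    |(({e ∈ G.edgeSet | ∀ v ∈ e, c v = i} : Set (Sym2 V)).ncard : ℤ) -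
      (({e ∈ G.edgeSet | ∀ v ∈ e, c v = j} : Set (Sym2 V)).ncard : ℤ)| ≤ 1

namespace KBalancedAux

open Finset

variable {V : Type*} [Fintype V] [DecidableEq V]

lemma ncard_setOf_eq (p : V → Prop) [DecidablePred p] :
    {v | p v}.ncard = (Finset.univ.filter p).card := by
  rw [Set.ncard_eq_toFinset_card']
  congr 1
  ext v
  simp

/-- monochromatic edge count in the complete graph -/
lemma top_mono_ncard {k : ℕ} (c : V → Fin k) (i : Fin k) :
    ({e ∈ (⊤ : SimpleGraph V).edgeSet | ∀ v ∈ e, c v = i} : Set (Sym2 V)).ncard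
      = ({v | c v = i} : Set V).ncard.choose 2 := by
  classical
  have hset : ({e ∈ (⊤ : SimpleGraph V).edgeSet | ∀ v ∈ e, c v = i} : Set (Sym2 V))
      = ↑(((Finset.univ.filter (fun v => c v = i)).offDiag).image Sym2.mk.uncurry) := by
    ext e
    induction e using Sym2.ind with
    | _ a b =>
      simp only [Set.mem_setOf_eq, SimpleGraph.mem_edgeSet, top_adj, Sym2.mem_iff,
        Finset.coe_image, Set.mem_image, Finset.mem_coe, Finset.mem_offDiag,
        Finset.mem_filter, Finset.mem_univ, true_and]
      constructor
      · rintro ⟨hab, hc⟩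
        exact ⟨(a, b), ⟨hc a (Or.inl rfl), hc b (Or.inr rfl), hab⟩, rfl⟩
      · rintro ⟨⟨x, y⟩, ⟨hx, hy, hxy⟩, he⟩
        rw [Function.uncurry_apply_pair, Sym2.eq_iff] at he
        rcases he with ⟨rfl, rfl⟩ | ⟨rfl, rfl⟩
        · exact ⟨hxy, by rintro v (rfl | rfl) <;> assumption⟩
        · exact ⟨hxy.symm, by rintro v (rfl | rfl) <;> assumption⟩
  rw [hset, Set.ncard_coe_finset, Sym2.card_image_offDiag, ncard_setOf_eq]

def starG (N : ℕ) (ctr : Fin N) : SimpleGraph (Fin N) where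
  Adj v w := v ≠ w ∧ (v = ctr ∨ w = ctr)
  symm := by
    constructor
    rintro v w ⟨h1, h2⟩
    exact ⟨h1.symm, h2.symm⟩
  loopless := ⟨fun v h => h.1 rfl⟩

lemma star_mono_empty {N k : ℕ} (ctr : Fin N) (c : Fin N → Fin k) {j : Fin k}
    (hj : c ctr ≠ j) :
    ({e ∈ (starG N ctr).edgeSet | ∀ v ∈ e, c v = j} : Set (Sym2 (Fin N))) = ∅ := by
  ext e
  induction e using Sym2.ind with
  | _ a b =>
    simp only [Set.mem_setOf_eq, SimpleGraph.mem_edgeSet, Sym2.mem_iff, Set.mem_empty_iff_false,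
      iff_false, not_and]
    rintro ⟨hab, (rfl | rfl)⟩ hc
    · exact hj (hc _ (Or.inl rfl))
    · exact hj (hc _ (Or.inr rfl))

lemma star_mono_ncard {N k : ℕ} (ctr : Fin N) (c : Fin N → Fin k) {j : Fin k}
    (hj : c ctr = j) :
    ({e ∈ (starG N ctr).edgeSet | ∀ v ∈ e, c v = j} : Set (Sym2 (Fin N))).ncard
      = ({v | c v = j} : Set (Fin N)).ncard - 1 := by
  classical
  have hset : ({e ∈ (starG N ctr).edgeSet | ∀ v ∈ e, c v = j} : Set (Sym2 (Fin N)))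
      = (fun v => s(ctr, v)) '' {v | v ≠ ctr ∧ c v = j} := by
    ext e
    induction e using Sym2.ind with
    | _ a b =>
      simp only [Set.mem_setOf_eq, SimpleGraph.mem_edgeSet, Sym2.mem_iff, Set.mem_image]
      constructor
      · rintro ⟨⟨hab, (rfl | rfl)⟩, hc⟩
        · exact ⟨b, ⟨fun h => hab h.symm, hc _ (Or.inr rfl)⟩, rfl⟩
        · exact ⟨a, ⟨hab, hc _ (Or.inl rfl)⟩, Sym2.eq_swap⟩
      · rintro ⟨v, ⟨hv, hcv⟩, he⟩
        rw [Sym2.eq_iff] at he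
        rcases he with ⟨rfl, rfl⟩ | ⟨rfl, rfl⟩
        · exact ⟨⟨fun h => hv h.symm, Or.inl rfl⟩,
            by rintro w (rfl | rfl) <;> [exact hj; exact hcv]⟩
        · exact ⟨⟨hv, Or.inr rfl⟩, by rintro w (rfl | rfl) <;> [exact hcv; exact hj]⟩
  rw [hset, Set.ncard_image_of_injOn, show ({v | v ≠ ctr ∧ c v = j} : Set (Fin N))
      = {v | c v = j} \ {ctr} by ext v; simp [and_comm]]
  · rw [Set.ncard_diff_singleton_of_mem (by simpa using hj)]
  · intro v hv w hw h
    simp only [Sym2.eq_iff] at h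
    rcases h with ⟨-, h⟩ | ⟨h1, h2⟩
    · exact h
    · exact absurd h2 hv.1

lemma card_filter_fin_val {N : ℕ} (p : ℕ → Prop) [DecidablePred p] :
    (Finset.univ.filter fun v : Fin N => p v.val).card = ((range N).filter p).card := by
  rw [show (range N).filter p = (Finset.univ.filter fun v : Fin N => p v.val).image Fin.val by
    ext x
    simp only [mem_filter, mem_range, mem_image, mem_univ, true_and]
    constructor
    · rintro ⟨hx, hp⟩; exact ⟨⟨x, hx⟩, hp, rfl⟩
    · rintro ⟨v, hp, rfl⟩; exact ⟨v.isLt, hp⟩]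
  exact (Finset.card_image_of_injective _ Fin.val_injective).symm

lemma mod_count_lo {N m i : ℕ} (hm : 0 < m) (hi : i < m) :
    N / m ≤ ((range N).filter (fun x => x % m = i)).card := by
  have := Finset.card_le_card_of_injOn (fun t => m * t + i)
    (s := range (N / m)) (t := (range N).filter (fun x => x % m = i))
    (fun t ht => by
      simp only [mem_coe, mem_range] at ht
      simp only [mem_coe, mem_filter, mem_range]
      constructor
      · have h1 : m * (t + 1) ≤ m * (N / m) := Nat.mul_le_mul_left m ht
        have h2 : m * (N / m) ≤ N := Nat.mul_div_le N m
        rw [Nat.mul_succ] at h1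
        omega
      · rw [Nat.mul_add_mod, Nat.mod_eq_of_lt hi])
    (fun a _ b _ h => by
      have h' : m * a + i = m * b + i := h
      have : m * a = m * b := by omega
      exact Nat.eq_of_mul_eq_mul_left hm this)
  simpa using this

lemma mod_count_hi {N m i : ℕ} (hm : 0 < m) :
    ((range N).filter (fun x => x % m = i)).card ≤ N / m + 1 := by
  have := Finset.card_le_card_of_injOn (fun x => x / m)
    (s := (range N).filter (fun x => x % m = i)) (t := range (N / m + 1))
    (fun x hx => by
      simp only [mem_coe, mem_filter, mem_range] at hx
      simp only [mem_coe, mem_range]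
      have := Nat.div_le_div_right (c := m) (Nat.le_of_lt hx.1)
      omega)
    (fun a ha b hb h => by
      simp only [mem_filter, coe_filter, Set.mem_setOf_eq, mem_coe, mem_range] at ha hb
      have h1 := Nat.div_add_mod a m
      have h2 := Nat.div_add_mod b m
      have h' : a / m = b / m := h
      have h3 : m * (a / m) = m * (b / m) := by rw [h']
      omega)
  simpa using this

lemma mod_count_last {N m : ℕ} (hm : 0 < m) :
    ((range N).filter (fun x => x % m = m - 1)).card ≤ N / m := by
  have := Finset.card_le_card_of_injOn (fun x => x / m)
    (s := (range N).filter (fun x => x % m = m - 1)) (t := range (N / m))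
    (fun x hx => by
      simp only [mem_coe, mem_filter, mem_range] at hx
      simp only [mem_coe, mem_range]
      have h1 := Nat.div_add_mod x m
      have h3 : m * (x / m) + m ≤ N := by omega
      have h2 : x / m + 1 ≤ N / m := by
        calc x / m + 1 = (m * (x / m) + m) / m := by
              rw [Nat.mul_add_div hm, Nat.div_self hm]
          _ ≤ N / m := Nat.div_le_div_right h3
      omega)
    (fun a ha b hb h => by
      simp only [coe_filter, Set.mem_setOf_eq, mem_range] at ha hb
      have h1 := Nat.div_add_mod a m
      have h2 := Nat.div_add_mod b m
      have h' : a / m = b / m := h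
      have h3 : m * (a / m) = m * (b / m) := by rw [h']
      omega)
  simpa using this

lemma div_count {m q i : ℕ} (hq : 0 < q) (hi : i < m) :
    ((range (m * q)).filter (fun x => x / q = i)).card = q := by
  have hset : ((range (m * q)).filter (fun x => x / q = i))
      = Finset.Ico (i * q) ((i + 1) * q) := by
    ext x
    simp only [mem_filter, mem_range, Finset.mem_Ico]
    constructor
    · rintro ⟨hx, rfl⟩
      have h1 := Nat.div_add_mod x q
      have h2 : x % q < q := Nat.mod_lt _ hq
      constructor
      · calc (x / q) * q = q * (x / q) := Nat.mul_comm _ _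
          _ ≤ x := by omega
      · calc x = q * (x / q) + x % q := h1.symm
          _ < (x / q + 1) * q := by rw [Nat.add_mul, one_mul, Nat.mul_comm]; omega
    · rintro ⟨h1, h2⟩
      constructor
      · calc x < (i + 1) * q := h2
          _ ≤ m * q := Nat.mul_le_mul_right _ hi
      · exact Nat.div_eq_of_lt_le h1 h2
  rw [hset, Nat.card_Ico]
  rw [Nat.add_mul, one_mul]
  omega

lemma sum_card_fibers {N k : ℕ} (c : Fin N → Fin k) :
    ∑ i : Fin k, (Finset.univ.filter fun v : Fin N => c v = i).card = N := by
  classical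
  rw [← Finset.card_eq_sum_card_fiberwise (fun v (_ : v ∈ Finset.univ) => Finset.mem_univ (c v))]
  simp

end KBalancedAux

open KBalancedAux Finset

theorem exists_m_balanced_not_n_balanced (m n : ℕ) (hm : 2 ≤ m) (hn : 2 ≤ n) (hmn : m ≠ n) :
    ∃ (N : ℕ) (G : SimpleGraph (Fin N)), IsKBalanced m G ∧ ¬ IsKBalanced n G := by
  have hm0 : 0 < m := by omega
  have hn0 : 0 < n := by omega
  rcases hmn.lt_or_gt with hlt | hgt
  · -- m < n : the complete graph on m*(n+1) vertices
    set N := m * (n + 1) with hNdef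
    refine ⟨N, ⊤, ?_, ?_⟩
    · -- m-balanced
      have hlt' : ∀ v : Fin N, v.val / (n + 1) < m := fun v => by
        have hv : (v : ℕ) < m * (n + 1) := v.isLt
        rw [Nat.div_lt_iff_lt_mul (Nat.succ_pos n)]
        exact hv
      refine ⟨fun v => ⟨v.val / (n + 1), hlt' v⟩, ?_⟩
      have key : ∀ i : Fin m,
          ({v : Fin N | (⟨v.val / (n + 1), hlt' v⟩ : Fin m) = i}).ncard = n + 1 := by
        intro i
        rw [ncard_setOf_eq]
        rw [show (Finset.univ.filter fun v : Fin N => (⟨v.val / (n + 1), hlt' v⟩ : Fin m) = i)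
            = Finset.univ.filter (fun v : Fin N => v.val / (n + 1) = i.val) from
          Finset.filter_congr (fun v _ => by simp [Fin.ext_iff])]
        rw [card_filter_fin_val (fun x => x / (n + 1) = i.val)]
        exact div_count (Nat.succ_pos n) i.isLt
      intro i j
      constructor
      · rw [key i, key j]
        simp
      · rw [top_mono_ncard, top_mono_ncard, key i, key j]
        simp
    · -- not n-balanced
      rintro ⟨c, hc⟩
      set s : Fin n → ℕ := fun i => (Finset.univ.filter fun v : Fin N => c v = i).card with hsdef
      have hvs : ∀ i, ({v | c v = i} : Set (Fin N)).ncard = s i := fun i => ncard_setOf_eq _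
      have hsum : ∑ i, s i = N := sum_card_fibers c
      have hv : ∀ i j, |(s i : ℤ) - (s j : ℤ)| ≤ 1 := fun i j => by
        have := (hc i j).1
        rwa [hvs i, hvs j] at this
      have he : ∀ i j, |((s i).choose 2 : ℤ) - ((s j).choose 2 : ℤ)| ≤ 1 := fun i j => by
        have := (hc i j).2
        rwa [top_mono_ncard, top_mono_ncard, hvs i, hvs j] at this
      obtain ⟨j0, -, hj0⟩ := Finset.exists_min_image Finset.univ s
        ⟨⟨0, hn0⟩, Finset.mem_univ _⟩
      have hlb : ∀ i, s j0 ≤ s i := fun i => hj0 i (Finset.mem_univ i)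
      have hub : ∀ i, s i ≤ s j0 + 1 := fun i => by
        have := hv i j0
        rw [abs_le] at this
        omega
      -- some class has size s j0 + 1
      have hex : ∃ j1, s j1 = s j0 + 1 := by
        by_contra hno
        push_neg at hno
        have hall : ∀ i, s i = s j0 := fun i => by
          have := hlb i
          have := hub i
          have := hno i
          omega
        have hNeq : N = n * s j0 := by
          rw [← hsum]
          rw [Finset.sum_congr rfl (fun i _ => hall i)]
          simp [Finset.card_univ, mul_comm]
        have hdvd : n ∣ m := by
          have h1 : n ∣ n * s j0 := dvd_mul_right _ _
          have h2 : n ∣ m * n := dvd_mul_left _ _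
          have h3 : N = m * n + m := by rw [hNdef]; ring
          rw [h3] at hNeq
          exact (Nat.dvd_add_right h2).mp (hNeq ▸ h1)
        have := Nat.le_of_dvd hm0 hdvd
        omega
      -- min size is at least 2
      have ha2 : 2 ≤ s j0 := by
        by_contra hle
        push_neg at hle
        have hsumle : N = ∑ i, s i := hsum.symm
        have : ∑ i, s i ≤ ∑ _i : Fin n, (s j0 + 1) :=
          Finset.sum_le_sum (fun i _ => hub i)
        have h2 : ∑ _i : Fin n, (s j0 + 1) = n * (s j0 + 1) := by
          simp [Finset.sum_const, Finset.card_univ, mul_comm]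
        have h3 : n * (s j0 + 1) ≤ n * 2 := Nat.mul_le_mul_left n (by omega)
        have h4 : 2 * (n + 1) ≤ m * (n + 1) := Nat.mul_le_mul_right _ hm
        omega
      obtain ⟨j1, hj1⟩ := hex
      have := he j1 j0
      rw [hj1] at this
      have hch : (s j0 + 1).choose 2 = s j0 + (s j0).choose 2 := by
        rw [Nat.choose_succ_succ, Nat.choose_one_right]
      rw [hch, abs_le] at this
      push_cast at this
      omega
  · -- n < m : the star graph on 3n vertices
    set N := 3 * n with hNdef
    have hN0 : 0 < N := by omega
    set ctr : Fin N := ⟨(m - 1) % N, Nat.mod_lt _ hN0⟩ with hctrdef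
    refine ⟨N, starG N ctr, ?_, ?_⟩
    · -- m-balanced with mod-m coloring
      have hc' : ∀ v : Fin N, v.val % m < m := fun v => Nat.mod_lt _ hm0
      set c : Fin N → Fin m := fun v => ⟨v.val % m, hc' v⟩ with hcdef
      refine ⟨c, ?_⟩
      have key : ∀ i : Fin m, ({v : Fin N | c v = i}).ncard
          = ((range N).filter (fun x => x % m = i.val)).card := by
        intro i
        rw [ncard_setOf_eq]
        rw [show (Finset.univ.filter fun v : Fin N => c v = i)
            = Finset.univ.filter (fun v : Fin N => v.val % m = i.val) from
          Finset.filter_congr (fun v _ => by simp [hcdef, Fin.ext_iff])]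
        exact card_filter_fin_val (fun x => x % m = i.val)
      -- size of the center's class is at most 2
      have hctr_small : ({v : Fin N | c v = c ctr}).ncard ≤ 2 := by
        rw [key]
        by_cases hmN : m ≤ N
        · have hctrval : ctr.val = m - 1 := by
            show (m - 1) % N = m - 1
            exact Nat.mod_eq_of_lt (show m - 1 < N by omega)
          have hcc : (c ctr).val = m - 1 := by
            show ctr.val % m = m - 1
            rw [hctrval]
            exact Nat.mod_eq_of_lt (show m - 1 < m by omega)
          rw [hcc]
          have h1 := mod_count_last (N := N) hm0
          have h2 : N / m ≤ 2 := by
            have : N / m < 3 := by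
              rw [Nat.div_lt_iff_lt_mul hm0]
              omega
            omega
          omega
        · -- m > N : all classes have size ≤ 1
          push_neg at hmN
          refine le_trans (Finset.card_le_one.mpr ?_) (by omega)
          intro a ha b hb
          simp only [mem_filter, mem_range] at ha hb
          have ha' : a % m = a := Nat.mod_eq_of_lt (by omega)
          have hb' : b % m = b := Nat.mod_eq_of_lt (by omega)
          omega
      -- every monochromatic edge set has at most 1 element
      have hmono : ∀ j : Fin m,
          ({e ∈ (starG N ctr).edgeSet | ∀ v ∈ e, c v = j} : Set (Sym2 (Fin N))).ncard ≤ 1 := by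
        intro j
        by_cases hj : c ctr = j
        · rw [star_mono_ncard ctr c hj, ← hj]
          omega
        · rw [star_mono_empty ctr c hj]
          simp
      intro i j
      constructor
      · have h1 := mod_count_lo (N := N) hm0 i.isLt
        have h2 := mod_count_hi (N := N) (i := i.val) hm0
        have h3 := mod_count_lo (N := N) hm0 j.isLt
        have h4 := mod_count_hi (N := N) (i := j.val) hm0
        rw [key i, key j, abs_le]
        constructor <;> [skip; skip] <;> push_cast <;> omega
      · have h1 := hmono i
        have h2 := hmono j
        rw [abs_le]
        constructor <;> push_cast <;> omega
    · -- not n-balanced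
      rintro ⟨c, hc⟩
      set s : Fin n → ℕ := fun i => (Finset.univ.filter fun v : Fin N => c v = i).card with hsdef
      have hvs : ∀ i, ({v | c v = i} : Set (Fin N)).ncard = s i := fun i => ncard_setOf_eq _
      have hsum : ∑ i, s i = N := sum_card_fibers c
      have hv : ∀ i j, |(s i : ℤ) - (s j : ℤ)| ≤ 1 := fun i j => by
        have := (hc i j).1
        rwa [hvs i, hvs j] at this
      obtain ⟨j0, -, hj0⟩ := Finset.exists_min_image Finset.univ s
        ⟨⟨0, hn0⟩, Finset.mem_univ _⟩
      have hlb : ∀ i, s j0 ≤ s i := fun i => hj0 i (Finset.mem_univ i)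
      have hub : ∀ i, s i ≤ s j0 + 1 := fun i => by
        have := hv i j0
        rw [abs_le] at this
        omega
      -- min size ≥ 3
      have ha3 : 3 ≤ s j0 := by
        by_contra hle
        push_neg at hle
        have hsplit : s j0 + ∑ i ∈ Finset.univ.erase j0, s i = ∑ i, s i :=
          Finset.add_sum_erase _ s (Finset.mem_univ j0)
        have hbound : ∑ i ∈ Finset.univ.erase j0, s i ≤ (n - 1) * (s j0 + 1) := by
          calc ∑ i ∈ Finset.univ.erase j0, s i
              ≤ ∑ _i ∈ Finset.univ.erase j0, (s j0 + 1) :=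
                Finset.sum_le_sum (fun i _ => hub i)
            _ = (n - 1) * (s j0 + 1) := by
                rw [Finset.sum_const, smul_eq_mul]
                congr 1
                rw [Finset.card_erase_of_mem (Finset.mem_univ _)]
                simp
        have h3 : (n - 1) * (s j0 + 1) ≤ (n - 1) * 3 := Nat.mul_le_mul_left _ (by omega)
        have h4 : (n - 1) * 3 = 3 * n - 3 := by omega
        omega
      -- center's class therefore has ≥ 3 vertices, giving ≥ 2 monochromatic edges
      have hctr3 : 3 ≤ s (c ctr) := le_trans ha3 (hlb _)
      obtain ⟨j, hjne⟩ := @exists_ne (Fin n) (Fin.nontrivial_iff_two_le.mpr hn) (c ctr)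
      have := (hc (c ctr) j).2
      rw [star_mono_ncard ctr c rfl, star_mono_empty ctr c (Ne.symm hjne)]
        at this
      rw [hvs (c ctr)] at this
      simp only [Set.ncard_empty] at this
      rw [abs_le] at this
      push_cast at this
      omega
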